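/- arXiv:2212.00568 — 3 statements merged into one kernel-verified Lean document; each statement's English description precedes it below -/
import Mathlib

section
/- Let g₁,…,g_K be probability densities each of whose support contains supp(φ·f), let α ∈ S_K with α_k > 0, and let g_α = Σ_k α_k g_k. Then for any k, with β* the optimal control parameter for control function g_k under sampling density g_α, Var_{g_α}([φ(X)f(X) − β* g_k(X)]/g_α(X)) ≤ α_k⁻¹ Var_{g_k}(φ(X)f(X)/g_k(X)). -/
open MeasureTheory ProbabilityTheory

/-- The measure with density `g` with respect to `μ`. -/
noncomputable def den {E : Type*} [MeasurableSpace E] (μ : Measure E) (g : E → ℝ) :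
    Measure E :=
  μ.withDensity (fun x => ENNReal.ofReal (g x))

/-- Covariance of two real random variables under a measure. -/
noncomputable def cov {E : Type*} [MeasurableSpace E] (A B : E → ℝ) (ν : Measure E) : ℝ :=
  ∫ x, (A x - ∫ y, A y ∂ν) * (B x - ∫ y, B y ∂ν) ∂ν

open scoped ENNReal NNReal

lemma den_eq {E : Type*} [MeasurableSpace E] (μ : Measure E) (g : E → ℝ) :
    den μ g = μ.withDensity (fun x => ((g x).toNNReal : ℝ≥0∞)) := rfl

lemma integral_den {E : Type*} [MeasurableSpace E] (μ : Measure E) {g : E → ℝ}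
    (hg0 : ∀ x, 0 ≤ g x) (hgm : AEMeasurable g μ) (h : E → ℝ) :
    ∫ x, h x ∂(den μ g) = ∫ x, g x * h x ∂μ := by
  rw [den_eq, integral_withDensity_eq_integral_smul₀ hgm.real_toNNReal]
  congr 1; funext x
  simp [NNReal.smul_def, Real.coe_toNNReal _ (hg0 x)]

lemma integrable_den_iff {E : Type*} [MeasurableSpace E] (μ : Measure E) {g : E → ℝ}
    (hg0 : ∀ x, 0 ≤ g x) (hgm : AEMeasurable g μ) (h : E → ℝ) :
    Integrable h (den μ g) ↔ Integrable (fun x => g x * h x) μ := by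
  rw [den_eq, integrable_withDensity_iff_integrable_smul₀ hgm.real_toNNReal]
  constructor
  · intro H; apply H.congr; filter_upwards with x
    simp [NNReal.smul_def, Real.coe_toNNReal _ (hg0 x)]
  · intro H; apply H.congr; filter_upwards with x
    simp [NNReal.smul_def, Real.coe_toNNReal _ (hg0 x)]

lemma isProb_den {E : Type*} [MeasurableSpace E] (μ : Measure E) {g : E → ℝ}
    (hg0 : ∀ x, 0 ≤ g x) (hgi : Integrable g μ) (hg1 : ∫ x, g x ∂μ = 1) :
    IsProbabilityMeasure (den μ g) := by
  constructor
  rw [den, withDensity_apply _ MeasurableSet.univ, Measure.restrict_univ,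
    ← ofReal_integral_eq_lintegral_ofReal hgi (Filter.Eventually.of_forall hg0), hg1,
    ENNReal.ofReal_one]

lemma variance_sub_mul {E : Type*} [MeasurableSpace E] (ν : Measure E) [IsProbabilityMeasure ν]
    {A B : E → ℝ} (hA : MemLp A 2 ν) (hB : MemLp B 2 ν) (c : ℝ) :
    variance (fun x => A x - c * B x) ν
      = variance A ν - 2*c*(cov A B ν) + c^2 * variance B ν := by
  have hAi : Integrable A ν := hA.integrable one_le_two
  have hBi : Integrable B ν := hB.integrable one_le_two
  set EA := ∫ x, A x ∂ν with hEA
  set EB := ∫ x, B x ∂ν with hEB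
  have hA' : MemLp (fun x => A x - EA) 2 ν := hA.sub (memLp_const EA)
  have hB' : MemLp (fun x => B x - EB) 2 ν := hB.sub (memLp_const EB)
  have hA2 : Integrable (fun x => (A x - EA)^2) ν := hA'.integrable_sq
  have hB2 : Integrable (fun x => (B x - EB)^2) ν := hB'.integrable_sq
  have hABm : MemLp ((fun x => A x - EA) • (fun x => B x - EB)) 1 ν :=
    hB'.smul hA'
  have hAB : Integrable (fun x => (A x - EA) * (B x - EB)) ν := by
    have := memLp_one_iff_integrable.mp hABm
    apply this.congr; filter_upwards with x; simp [Pi.smul_apply', smul_eq_mul]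
  have hXm : MemLp (fun x => A x - c * B x) 2 ν := hA.sub (hB.const_mul c)
  have hE : ∫ x, (A x - c * B x) ∂ν = EA - c * EB := by
    rw [integral_sub hAi (hBi.const_mul c), integral_const_mul]
  rw [variance_eq_integral hXm.aemeasurable, variance_eq_integral hA.aemeasurable, variance_eq_integral hB.aemeasurable]
  rw [hE]
  have key : ∀ x, (A x - c*B x - (EA - c*EB))^2
      = ((A x - EA)^2 - (2*c) * ((A x - EA)*(B x - EB))) + c^2 * (B x - EB)^2 := by
    intro x; ring
  simp_rw [key]
  have h1 : Integrable (fun x => (A x - EA)^2 - 2*c*((A x - EA)*(B x - EB))) ν :=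
    hA2.sub (hAB.const_mul _)
  have h2 : Integrable (fun x => c^2 * (B x - EB)^2) ν := hB2.const_mul _
  rw [integral_add h1 h2, integral_sub hA2 (hAB.const_mul _), integral_const_mul,
    integral_const_mul]
  have hc : cov A B ν = ∫ x, (A x - EA) * (B x - EB) ∂ν := rfl
  rw [hc, ← hEA, ← hEB]

/-- For a mixture `g_α = Σ α_k g_k` with all `α_k > 0`, using component `g_k`
as control function with the optimal control parameter `β*`, the variance satisfies
`Var_{g_α}([φf − β* g_k]/g_α) ≤ α_k⁻¹ Var_{g_k}(φf/g_k)`. -/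
theorem mixture_CV_variance_bound
    {E : Type*} [MeasurableSpace E] (μ : Measure E)
    (f φ : E → ℝ) (K : ℕ) (gs : Fin K → E → ℝ) (α : Fin K → ℝ)
    (hf0 : ∀ x, 0 ≤ f x) (hf1 : ∫ x, f x ∂μ = 1)
    (hφ0 : ∀ x, 0 ≤ φ x)
    (hgs0 : ∀ i x, 0 ≤ gs i x) (hgs1 : ∀ i, ∫ x, gs i x ∂μ = 1)
    (hsupp : ∀ i x, gs i x = 0 → φ x * f x = 0)
    (hα0 : ∀ i, 0 < α i) (hα1 : ∑ i, α i = 1)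
    (k : Fin K)
    (hL2k : MemLp (fun x => φ x * f x / gs k x) 2 (den μ (gs k)))
    (hL2α : MemLp (fun x => φ x * f x / ∑ i, α i * gs i x) 2
      (den μ (fun x => ∑ i, α i * gs i x)))
    (hL2c : MemLp (fun x => gs k x / ∑ i, α i * gs i x) 2
      (den μ (fun x => ∑ i, α i * gs i x)))
    (hVarc : 0 < variance (fun x => gs k x / ∑ i, α i * gs i x)
      (den μ (fun x => ∑ i, α i * gs i x))) :
    variance (fun x => (φ x * f x
        - (cov (fun y => φ y * f y / ∑ i, α i * gs i y)
              (fun y => gs k y / ∑ i, α i * gs i y)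
              (den μ (fun y => ∑ i, α i * gs i y))
            / variance (fun y => gs k y / ∑ i, α i * gs i y)
              (den μ (fun y => ∑ i, α i * gs i y))) * gs k x)
        / ∑ i, α i * gs i x)
      (den μ (fun x => ∑ i, α i * gs i x))
    ≤ (α k)⁻¹ * variance (fun x => φ x * f x / gs k x) (den μ (gs k)) := by
  classical
  have hgsInt : ∀ i, Integrable (gs i) μ := by
    intro i
    by_contra h
    have h1 := hgs1 i
    rw [integral_undef h] at h1
    norm_num at h1
  have hgα0 : ∀ x, 0 ≤ ∑ i, α i * gs i x := fun x =>
    Finset.sum_nonneg fun i _ => mul_nonneg (hα0 i).le (hgs0 i x)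
  have hgαInt : Integrable (fun x => ∑ i, α i * gs i x) μ :=
    integrable_finset_sum _ fun i _ => (hgsInt i).const_mul (α i)
  have hgαm : AEMeasurable (fun x => ∑ i, α i * gs i x) μ := hgαInt.aemeasurable
  have hgα1 : ∫ x, (∑ i, α i * gs i x) ∂μ = 1 := by
    rw [integral_finset_sum _ fun i _ => (hgsInt i).const_mul (α i)]
    simp_rw [integral_const_mul, hgs1, mul_one]
    exact hα1
  haveI hPν : IsProbabilityMeasure (den μ (fun x => ∑ i, α i * gs i x)) :=
    isProb_den μ hgα0 hgαInt hgα1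
  haveI hPνk : IsProbabilityMeasure (den μ (gs k)) :=
    isProb_den μ (hgs0 k) (hgsInt k) (hgs1 k)
  set ν := den μ (fun x => ∑ i, α i * gs i x) with hν
  set A : E → ℝ := fun x => φ x * f x / ∑ i, α i * gs i x with hA
  set B : E → ℝ := fun x => gs k x / ∑ i, α i * gs i x with hB
  set β : ℝ := cov A B ν / variance B ν with hβ
  have hfun : (fun x => (φ x * f x - β * gs k x) / ∑ i, α i * gs i x)
      = fun x => A x - β * B x := by
    funext x
    simp only [hA, hB]
    rw [sub_div, mul_div_assoc]
    ring
  rw [hfun]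
  set m := ∫ x, φ x * f x ∂μ with hm
  have hEC : ∫ x, φ x * f x / gs k x ∂(den μ (gs k)) = m := by
    rw [integral_den μ (hgs0 k) (hgsInt k).aemeasurable, hm]
    congr 1; funext x
    rcases eq_or_ne (gs k x) 0 with h | h
    · simp [h, hsupp k x h]
    · field_simp
  have hVarCk : variance (fun x => φ x * f x / gs k x) (den μ (gs k))
      = ∫ x, gs k x * (φ x * f x / gs k x - m)^2 ∂μ := by
    rw [variance_eq_integral hL2k.aemeasurable]
    rw [hEC, integral_den μ (hgs0 k) (hgsInt k).aemeasurable]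
  have hCint : Integrable (fun x => gs k x * (φ x * f x / gs k x - m)^2) μ := by
    have h1 : Integrable (fun x => (φ x * f x / gs k x - m)^2) (den μ (gs k)) :=
      (hL2k.sub (memLp_const m)).integrable_sq
    exact (integrable_den_iff μ (hgs0 k) (hgsInt k).aemeasurable _).mp h1
  have hstep1 : variance (fun x => A x - β * B x) ν
      ≤ variance (fun x => A x - m * B x) ν := by
    rw [variance_sub_mul ν hL2α hL2c β, variance_sub_mul ν hL2α hL2c m]
    have hβVB : β * variance B ν = cov A B ν := by
      rw [hβ, div_mul_cancel₀ _ hVarc.ne']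
    rw [← hβVB]
    nlinarith [mul_nonneg hVarc.le (sq_nonneg (m - β))]
  have hXm2 : MemLp (fun x => A x - m * B x) 2 ν := hL2α.sub (hL2c.const_mul m)
  have hstep2 : variance (fun x => A x - m * B x) ν ≤ ∫ x, (A x - m * B x)^2 ∂ν := by
    rw [variance_eq_sub hXm2]
    simp only [Pi.pow_apply]
    exact sub_le_self _ (sq_nonneg _)
  have hstep3 : ∫ x, (A x - m * B x)^2 ∂ν
      ≤ (α k)⁻¹ * variance (fun x => φ x * f x / gs k x) (den μ (gs k)) := by
    rw [hν, integral_den μ hgα0 hgαm, hVarCk, ← integral_const_mul]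
    apply integral_mono_of_nonneg
    · filter_upwards with x
      exact mul_nonneg (hgα0 x) (sq_nonneg _)
    · exact hCint.const_mul _
    · filter_upwards with x
      simp only [hA, hB]
      have hS_ge : α k * gs k x ≤ ∑ i, α i * gs i x :=
        Finset.single_le_sum (f := fun i => α i * gs i x)
          (fun i _ => mul_nonneg (hα0 i).le (hgs0 i x)) (Finset.mem_univ k)
      rcases eq_or_ne (gs k x) 0 with h | h
      · simp [h, hsupp k x h]
      · have hG : 0 < gs k x := lt_of_le_of_ne (hgs0 k x) (Ne.symm h)
        have hS : 0 < ∑ i, α i * gs i x := lt_of_lt_of_le (mul_pos (hα0 k) hG) hS_ge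
        have hG' : gs k x ≠ 0 := hG.ne'
        have hS' : (∑ i, α i * gs i x) ≠ 0 := hS.ne'
        have ha' : α k ≠ 0 := (hα0 k).ne'
        have e1 : φ x * f x / (∑ i, α i * gs i x) - m * (gs k x / ∑ i, α i * gs i x)
            = (φ x * f x - m * gs k x) / ∑ i, α i * gs i x := by
          rw [← mul_div_assoc, ← sub_div]
        have e2 : φ x * f x / gs k x - m = (φ x * f x - m * gs k x) / gs k x := by
          field_simp
        rw [e1, e2]
        have e3 : (∑ i, α i * gs i x) * ((φ x * f x - m * gs k x) / ∑ i, α i * gs i x)^2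
            = (φ x * f x - m * gs k x)^2 / ∑ i, α i * gs i x := by
          field_simp
        have e4 : (α k)⁻¹ * (gs k x * ((φ x * f x - m * gs k x) / gs k x)^2)
            = (φ x * f x - m * gs k x)^2 / (α k * gs k x) := by
          field_simp
        rw [e3, e4]
        exact div_le_div_of_nonneg_left (sq_nonneg _) (mul_pos (hα0 k) hG) hS_ge
  exact le_trans (le_trans hstep1 hstep2) hstep3
end

section
/- For any β₁,…,β_J ∈ ℝ and positive weights w₁,…,w_J, the function α ↦ Σ_{j=1}^J w_j Var_{g_α}([φ_j(X)f_j(X) − β_j g_{λ_j}(X)]/g_α(X)), with g_α = Σ_j α_j g_{λ_j}, is convex on the simplex S_J. -/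
open MeasureTheory ProbabilityTheory

private lemma aux_div_convex {a b c t s : ℝ} (ha : 0 ≤ a) (hb : 0 ≤ b)
    (ht : 0 ≤ t) (hs : 0 ≤ s) (hts : t + s = 1)
    (h0 : c ≠ 0 → 0 < a ∧ 0 < b) :
    c ^ 2 / (t * a + s * b) ≤ t * (c ^ 2 / a) + s * (c ^ 2 / b) := by
  by_cases hc : c = 0
  · simp [hc]
  obtain ⟨ha', hb'⟩ := h0 hc
  have hs' : s = 1 - t := by linarith
  subst hs'
  have hd : 0 < t * a + (1 - t) * b := by
    rcases eq_or_lt_of_le ht with h | h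
    · rw [← h]; simpa using hb'
    · nlinarith [mul_pos h ha', mul_nonneg hs hb'.le]
  rw [div_le_iff₀ hd]
  have h1 : t * (c ^ 2 / a) + (1 - t) * (c ^ 2 / b) = (t * b + (1 - t) * a) * c ^ 2 / (a * b) := by
    field_simp
  rw [h1, div_mul_eq_mul_div, le_div_iff₀ (mul_pos ha' hb')]
  nlinarith [mul_nonneg (mul_nonneg (mul_nonneg ht hs) (sq_nonneg (a - b))) (sq_nonneg c)]

/-- For any control parameters `β_j` and positive weights `w_j`, the map
`α ↦ Σ_j w_j Var_{g_α}([φ_j f_j − β_j g_{λ_j}]/g_α)` (with `g_α = Σ_j α_j g_{λ_j}`)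
is convex on the simplex `S_J`. -/
theorem weighted_sum_variance_convex
    {E : Type*} [MeasurableSpace E] (μ : Measure E)
    (J : ℕ) (fs φs : Fin J → E → ℝ) (gl : Fin J → E → ℝ)
    (β : Fin J → ℝ) (w : Fin J → ℝ)
    (hfs0 : ∀ j x, 0 ≤ fs j x) (hfs1 : ∀ j, ∫ x, fs j x ∂μ = 1)
    (hφs0 : ∀ j x, 0 ≤ φs j x)
    (hgl0 : ∀ j x, 0 ≤ gl j x) (hgl1 : ∀ j, ∫ x, gl j x ∂μ = 1)
    (hw : ∀ j, 0 < w j)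
    (hsupp : ∀ i j x, gl i x = 0 → φs j x * fs j x - β j * gl j x = 0)
    (hL2 : ∀ α ∈ stdSimplex ℝ (Fin J), ∀ j,
      MemLp (fun x => (φs j x * fs j x - β j * gl j x) / ∑ i, α i * gl i x) 2
        (den μ (fun x => ∑ i, α i * gl i x))) :
    ConvexOn ℝ (stdSimplex ℝ (Fin J))
      (fun α => ∑ j, w j *
        variance (fun x => (φs j x * fs j x - β j * gl j x) / ∑ i, α i * gl i x)
          (den μ (fun x => ∑ i, α i * gl i x))) := by
  set S := stdSimplex ℝ (Fin J) with hS
  -- integrability of the gl's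
  have hglint : ∀ i, Integrable (gl i) μ := by
    intro i
    by_contra h
    simpa [integral_undef h] using hgl1 i
  have hGint : ∀ α : Fin J → ℝ, Integrable (fun x => ∑ i, α i * gl i x) μ := by
    intro α
    simpa using integrable_finset_sum (Finset.univ : Finset (Fin J))
      (fun i _ => (hglint i).const_mul (α i))
  have hGnn : ∀ α ∈ S, ∀ x, (0:ℝ) ≤ ∑ i, α i * gl i x := by
    intro α hα x
    exact Finset.sum_nonneg fun i _ => mul_nonneg (hα.1 i) (hgl0 i x)
  have hψ0 : ∀ α ∈ S, ∀ j x, (∑ i, α i * gl i x) = 0 →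
      φs j x * fs j x - β j * gl j x = 0 := by
    intro α hα j x hx
    obtain ⟨i, hi⟩ : ∃ i, 0 < α i := by
      by_contra h
      push_neg at h
      have hz : ∀ i, α i = 0 := fun i => le_antisymm (h i) (hα.1 i)
      have h2 := hα.2
      simp [hz] at h2
    have hterm : α i * gl i x = 0 :=
      (Finset.sum_eq_zero_iff_of_nonneg
        (fun i _ => mul_nonneg (hα.1 i) (hgl0 i x))).mp hx i (Finset.mem_univ i)
    rcases mul_eq_zero.mp hterm with h | h
    · exact absurd h hi.ne'
    · exact hsupp i j x h
  have hGmeas : ∀ α : Fin J → ℝ,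
      AEMeasurable (fun x => (∑ i, α i * gl i x).toNNReal) μ := fun α =>
    measurable_real_toNNReal.comp_aemeasurable (hGint α).aestronglyMeasurable.aemeasurable
  have hden : ∀ α : Fin J → ℝ, den μ (fun x => ∑ i, α i * gl i x) =
      μ.withDensity (fun x => ((∑ i, α i * gl i x).toNNReal : ENNReal)) := fun α => rfl
  -- probability measure
  have hprob : ∀ α ∈ S, IsProbabilityMeasure (den μ (fun x => ∑ i, α i * gl i x)) := by
    intro α hα
    constructor
    rw [den, withDensity_apply _ MeasurableSet.univ, Measure.restrict_univ,
      ← ofReal_integral_eq_lintegral_ofReal (hGint α) (Filter.Eventually.of_forall (hGnn α hα))]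
    have : ∫ x, ∑ i, α i * gl i x ∂μ = 1 := by
      rw [integral_finset_sum _ (fun i _ => (hglint i).const_mul _)]
      simp [integral_const_mul, hgl1, hα.2]
    rw [this, ENNReal.ofReal_one]
  -- first moment
  have hm1 : ∀ α ∈ S, ∀ j,
      ∫ x, (φs j x * fs j x - β j * gl j x) / ∑ i, α i * gl i x
        ∂(den μ (fun x => ∑ i, α i * gl i x))
      = ∫ x, (φs j x * fs j x - β j * gl j x) ∂μ := by
    intro α hα j
    rw [hden α, integral_withDensity_eq_integral_smul₀ (hGmeas α)]
    refine integral_congr_ae (Filter.Eventually.of_forall fun x => ?_)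
    rcases (hGnn α hα x).eq_or_lt with h | h
    · simp [← h, hψ0 α hα j x h.symm]
    · simp only [NNReal.smul_def, Real.coe_toNNReal _ h.le, smul_eq_mul]
      field_simp [h.ne']
  -- second moment
  have hm2 : ∀ α ∈ S, ∀ j,
      ∫ x, ((φs j x * fs j x - β j * gl j x) / ∑ i, α i * gl i x) ^ 2
        ∂(den μ (fun x => ∑ i, α i * gl i x))
      = ∫ x, (φs j x * fs j x - β j * gl j x) ^ 2 / ∑ i, α i * gl i x ∂μ := by
    intro α hα j
    rw [hden α, integral_withDensity_eq_integral_smul₀ (hGmeas α)]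
    refine integral_congr_ae (Filter.Eventually.of_forall fun x => ?_)
    rcases (hGnn α hα x).eq_or_lt with h | h
    · simp [← h]
    · simp only [NNReal.smul_def, Real.coe_toNNReal _ h.le, smul_eq_mul]
      field_simp [h.ne']
  -- integrability of ψ²/gα over μ
  have hint2 : ∀ α ∈ S, ∀ j,
      Integrable (fun x => (φs j x * fs j x - β j * gl j x) ^ 2 / ∑ i, α i * gl i x) μ := by
    intro α hα j
    have h1 : Integrable
        (fun x => ((φs j x * fs j x - β j * gl j x) / ∑ i, α i * gl i x) ^ 2)
        (den μ (fun x => ∑ i, α i * gl i x)) := (hL2 α hα j).integrable_sq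
    rw [hden α, integrable_withDensity_iff_integrable_smul₀ (hGmeas α)] at h1
    refine h1.congr (Filter.Eventually.of_forall fun x => ?_)
    rcases (hGnn α hα x).eq_or_lt with h | h
    · simp [← h]
    · simp only [NNReal.smul_def, Real.coe_toNNReal _ h.le, smul_eq_mul]
      field_simp [h.ne']
  -- variance formula
  have hvar : ∀ α ∈ S, ∀ j,
      variance (fun x => (φs j x * fs j x - β j * gl j x) / ∑ i, α i * gl i x)
        (den μ (fun x => ∑ i, α i * gl i x))
      = (∫ x, (φs j x * fs j x - β j * gl j x) ^ 2 / ∑ i, α i * gl i x ∂μ)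
        - (∫ x, (φs j x * fs j x - β j * gl j x) ∂μ) ^ 2 := by
    intro α hα j
    have := hprob α hα
    rw [variance_eq_sub (hL2 α hα j)]
    have hpow : ((fun x => (φs j x * fs j x - β j * gl j x) / ∑ i, α i * gl i x) ^ 2)
        = fun x => ((φs j x * fs j x - β j * gl j x) / ∑ i, α i * gl i x) ^ 2 := rfl
    rw [hpow]
    rw [hm2 α hα j, hm1 α hα j]
  -- key convexity inequality for each j
  have hkey : ∀ j, ∀ α ∈ S, ∀ α' ∈ S, ∀ t s : ℝ, 0 ≤ t → 0 ≤ s → t + s = 1 →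
      (∫ x, (φs j x * fs j x - β j * gl j x) ^ 2 / ∑ i, (t • α + s • α') i * gl i x ∂μ)
      ≤ t * (∫ x, (φs j x * fs j x - β j * gl j x) ^ 2 / ∑ i, α i * gl i x ∂μ)
        + s * (∫ x, (φs j x * fs j x - β j * gl j x) ^ 2 / ∑ i, α' i * gl i x ∂μ) := by
    intro j α hα α' hα' t s ht hs hts
    have hmix : t • α + s • α' ∈ S := (convex_stdSimplex ℝ (Fin J)) hα hα' ht hs hts
    have hGmix : ∀ x, (∑ i, (t • α + s • α') i * gl i x)
        = t * (∑ i, α i * gl i x) + s * (∑ i, α' i * gl i x) := by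
      intro x
      rw [Finset.mul_sum, Finset.mul_sum, ← Finset.sum_add_distrib]
      refine Finset.sum_congr rfl fun i _ => ?_
      simp only [Pi.add_apply, Pi.smul_apply, smul_eq_mul]
      ring
    have hpt : ∀ x,
        (φs j x * fs j x - β j * gl j x) ^ 2 / ∑ i, (t • α + s • α') i * gl i x
        ≤ t * ((φs j x * fs j x - β j * gl j x) ^ 2 / ∑ i, α i * gl i x)
          + s * ((φs j x * fs j x - β j * gl j x) ^ 2 / ∑ i, α' i * gl i x) := by
      intro x
      rw [hGmix x]
      refine aux_div_convex (hGnn α hα x) (hGnn α' hα' x) ht hs hts fun hc => ?_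
      constructor
      · rcases (hGnn α hα x).eq_or_lt with h | h
        · exact absurd (hψ0 α hα j x h.symm) hc
        · exact h
      · rcases (hGnn α' hα' x).eq_or_lt with h | h
        · exact absurd (hψ0 α' hα' j x h.symm) hc
        · exact h
    calc (∫ x, (φs j x * fs j x - β j * gl j x) ^ 2 / ∑ i, (t • α + s • α') i * gl i x ∂μ)
        ≤ ∫ x, (t * ((φs j x * fs j x - β j * gl j x) ^ 2 / ∑ i, α i * gl i x)
            + s * ((φs j x * fs j x - β j * gl j x) ^ 2 / ∑ i, α' i * gl i x)) ∂μ :=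
          integral_mono (hint2 _ hmix j)
            (((hint2 α hα j).const_mul t).add ((hint2 α' hα' j).const_mul s)) hpt
      _ = t * (∫ x, (φs j x * fs j x - β j * gl j x) ^ 2 / ∑ i, α i * gl i x ∂μ)
            + s * (∫ x, (φs j x * fs j x - β j * gl j x) ^ 2 / ∑ i, α' i * gl i x ∂μ) := by
          rw [integral_add ((hint2 α hα j).const_mul t) ((hint2 α' hα' j).const_mul s),
            integral_const_mul, integral_const_mul]
  -- assemble
  refine ⟨convex_stdSimplex ℝ (Fin J), ?_⟩
  intro α hα α' hα' t s ht hs hts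
  have hmix : t • α + s • α' ∈ S := (convex_stdSimplex ℝ (Fin J)) hα hα' ht hs hts
  have hFeq : ∀ p ∈ S,
      (∑ j, w j * variance (fun x => (φs j x * fs j x - β j * gl j x) / ∑ i, p i * gl i x)
        (den μ (fun x => ∑ i, p i * gl i x)))
      = ∑ j, w j * ((∫ x, (φs j x * fs j x - β j * gl j x) ^ 2 / ∑ i, p i * gl i x ∂μ)
          - (∫ x, (φs j x * fs j x - β j * gl j x) ∂μ) ^ 2) := by
    intro p hp
    exact Finset.sum_congr rfl fun j _ => by rw [hvar p hp j]
  simp only [smul_eq_mul]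
  rw [hFeq _ hmix, hFeq _ hα, hFeq _ hα', Finset.mul_sum, Finset.mul_sum,
    ← Finset.sum_add_distrib]
  refine Finset.sum_le_sum fun j _ => ?_
  have hk := hkey j α hα α' hα' t s ht hs hts
  have hs' : s = 1 - t := by linarith
  subst hs'
  nlinarith [mul_le_mul_of_nonneg_left hk (hw j).le]
end

section
/- The Pick-Freeze identity: for independent inputs, Var[E(φ(X)|X_i)] = E[φ(X)φ(X^i)] − (E[φ(X)])², where X^i = (X_i, X'_{−i}) and X'_{−i} is an independent copy of X_{−i}. Consequently the first-order Sobol' index satisfies S_i = (E[φ(X)φ(X^i)] − E[φ(X)]²)/(E[φ(X)²] − E[φ(X)]²). -/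
open MeasureTheory ProbabilityTheory

lemma my_variance_congr {Ω : Type*} [MeasurableSpace Ω] {μ : Measure Ω} {f g : Ω → ℝ}
    (h : f =ᵐ[μ] g) : variance f μ = variance g μ := by
  unfold ProbabilityTheory.variance ProbabilityTheory.evariance
  congr 1
  rw [integral_congr_ae h]
  exact lintegral_congr_ae (h.mono fun ω hω => by simp only [hω])

lemma pick_freeze_aux {Ω : Type*} [MeasurableSpace Ω] (P : Measure Ω) [IsProbabilityMeasure P]
    {β : Type*} [MeasurableSpace β]
    (A : Ω → ℝ) (B B' : Ω → β) (G : ℝ × β → ℝ)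
    (hAm : Measurable A) (hBm : Measurable B) (hB'm : Measurable B')
    (hGm : Measurable G)
    (hindepAB : IndepFun A B P)
    (hindepABB' : IndepFun (fun ω => (A ω, B ω)) B' P)
    (hκ : Measure.map B' P = Measure.map B P)
    (hL2 : MemLp (fun ω => G (A ω, B ω)) 2 P) :
    variance (P[(fun ω => G (A ω, B ω)) | MeasurableSpace.comap A inferInstance]) P
      = (∫ ω, G (A ω, B ω) * G (A ω, B' ω) ∂P) - (∫ ω, G (A ω, B ω) ∂P) ^ 2 := by
  set ν : Measure ℝ := Measure.map A P with hν
  set κ : Measure β := Measure.map B P with hκdef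
  haveI : IsProbabilityMeasure ν := Measure.isProbabilityMeasure_map hAm.aemeasurable
  haveI : IsProbabilityMeasure κ := Measure.isProbabilityMeasure_map hBm.aemeasurable
  have hABm : Measurable (fun ω => (A ω, B ω)) := hAm.prodMk hBm
  have hGsm : StronglyMeasurable G := hGm.stronglyMeasurable
  have hmapAB : Measure.map (fun ω => (A ω, B ω)) P = ν.prod κ :=
    (indepFun_iff_map_prod_eq_prod_map_map hAm.aemeasurable hBm.aemeasurable).1 hindepAB
  have hmapAll : Measure.map (fun ω => ((A ω, B ω), B' ω)) P = (ν.prod κ).prod κ := by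
    rw [(indepFun_iff_map_prod_eq_prod_map_map hABm.aemeasurable hB'm.aemeasurable).1 hindepABB',
      hmapAB, hκ]
  -- G is L² on the product
  have hGL2 : MemLp G 2 (ν.prod κ) := by
    rw [← hmapAB]
    exact (memLp_map_measure_iff hGsm.aestronglyMeasurable hABm.aemeasurable).2 hL2
  have hGint : Integrable G (ν.prod κ) := hGL2.integrable one_le_two
  have hG2int : Integrable (fun p => G p ^ 2) (ν.prod κ) := by
    simpa [Pi.pow_apply] using hGL2.integrable_sq
  -- the conditional mean function
  set g : ℝ → ℝ := fun a => ∫ b, G (a, b) ∂κ with hg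
  have hgsm : StronglyMeasurable g := hGsm.integral_prod_right'
  have hgint : Integrable g ν := hGint.integral_prod_left
  have hqint : Integrable (fun a => ∫ b, G (a, b) ^ 2 ∂κ) ν := hG2int.integral_prod_left
  have hbound : ∀ᵐ a ∂ν, g a ^ 2 ≤ ∫ b, G (a, b) ^ 2 ∂κ := by
    filter_upwards [hGint.prod_right_ae, hG2int.prod_right_ae] with a h1 h2
    have hmem : MemLp (fun b => G (a, b)) 2 κ := by
      refine (memLp_two_iff_integrable_sq ?_).2 (by simpa using h2)
      exact (hGsm.comp_measurable measurable_prodMk_left).aestronglyMeasurable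
    have hnn := variance_nonneg (fun b => G (a, b)) κ
    rw [variance_eq_sub hmem] at hnn
    simp only [Pi.pow_apply] at hnn
    have h3 : (∫ b, G (a, b) ∂κ) ^ 2 ≤ ∫ b, G (a, b) ^ 2 ∂κ := by linarith
    simpa [hg] using h3
  have hg2int : Integrable (fun a => g a ^ 2) ν := by
    refine Integrable.mono' hqint ((hgsm.pow 2).aestronglyMeasurable) ?_
    filter_upwards [hbound] with a ha
    rwa [Real.norm_eq_abs, abs_of_nonneg (sq_nonneg _)]
  have hgL2 : MemLp g 2 ν :=
    (memLp_two_iff_integrable_sq hgsm.aestronglyMeasurable).2 (by simpa using hg2int)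
  -- conditional expectation identification
  have hm : MeasurableSpace.comap A inferInstance ≤ _ := hAm.comap_le
  haveI : SigmaFinite (P.trim hm) := by
    haveI : IsFiniteMeasure (P.trim hm) := isFiniteMeasure_trim hm
    infer_instance
  have hYint : Integrable (fun ω => G (A ω, B ω)) P := hL2.integrable one_le_two
  have hhint : Integrable (fun ω => g (A ω)) P :=
    (integrable_map_measure hgsm.aestronglyMeasurable hAm.aemeasurable).1 hgint
  have hsetint : ∀ s : Set Ω, MeasurableSet[MeasurableSpace.comap A inferInstance] s →
      ∫ ω in s, g (A ω) ∂P = ∫ ω in s, G (A ω, B ω) ∂P := by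
    rintro s ⟨t, ht, rfl⟩
    have h1 : ∫ ω in A ⁻¹' t, g (A ω) ∂P = ∫ a in t, g a ∂ν := by
      rw [hν, setIntegral_map ht hgsm.aestronglyMeasurable hAm.aemeasurable]
    have h2 : ∫ ω in A ⁻¹' t, G (A ω, B ω) ∂P = ∫ a in t, g a ∂ν := by
      have hpre : A ⁻¹' t = (fun ω => (A ω, B ω)) ⁻¹' (t ×ˢ Set.univ) := by
        ext ω; simp
      have hGint' : Integrable G ((ν.restrict t).prod κ) := by
        have h5 := hGint.integrableOn (s := t ×ˢ Set.univ)
        rwa [IntegrableOn, ← Measure.prod_restrict, Measure.restrict_univ] at h5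
      rw [hpre, ← setIntegral_map (ht.prod MeasurableSet.univ) hGsm.aestronglyMeasurable
        hABm.aemeasurable, hmapAB, ← Measure.prod_restrict, Measure.restrict_univ,
        integral_prod _ hGint']
    rw [h1, h2]
  have hcond : (fun ω => g (A ω)) =ᵐ[P]
      P[(fun ω => G (A ω, B ω)) | MeasurableSpace.comap A inferInstance] := by
    refine ae_eq_condExp_of_forall_setIntegral_eq hm hYint
      (fun s _ _ => hhint.integrableOn) (fun s hs _ => hsetint s hs) ?_
    have hAm' : Measurable[MeasurableSpace.comap A inferInstance] A :=
      Measurable.of_comap_le le_rfl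
    exact StronglyMeasurable.aestronglyMeasurable
      ((hgsm.measurable.comp hAm').stronglyMeasurable)
  -- moments of g ∘ A
  have hhL2 : MemLp (fun ω => g (A ω)) 2 P :=
    (memLp_map_measure_iff hgsm.aestronglyMeasurable hAm.aemeasurable).1 hgL2
  have hmean : ∫ ω, g (A ω) ∂P = ∫ ω, G (A ω, B ω) ∂P := by
    rw [integral_congr_ae hcond, integral_condExp hm]
  have hsq : ∫ ω, g (A ω) ^ 2 ∂P = ∫ a, g a ^ 2 ∂ν := by
    rw [hν, integral_map hAm.aemeasurable]
    exact (hgsm.pow 2).aestronglyMeasurable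
  -- the pick-freeze covariance computation
  have hmr : Measurable (fun q : (ℝ × β) × β => ((q.1.1 : ℝ), q.2)) :=
    (measurable_fst.comp measurable_fst).prodMk measurable_snd
  have hmap2 : Measure.map (fun q : (ℝ × β) × β => ((q.1.1 : ℝ), q.2)) ((ν.prod κ).prod κ)
      = ν.prod κ := by
    have he : (fun q : (ℝ × β) × β => ((q.1.1 : ℝ), q.2))
        = Prod.map (Prod.fst : ℝ × β → ℝ) (id : β → β) := rfl
    rw [he, ← Measure.map_prod_map _ _ measurable_fst measurable_id]
    simp
  have hF1 : MemLp (fun q : (ℝ × β) × β => G q.1) 2 ((ν.prod κ).prod κ) := by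
    have hmapfst : Measure.map (Prod.fst : (ℝ × β) × β → ℝ × β) ((ν.prod κ).prod κ)
        = ν.prod κ := by simp
    rw [← hmapfst] at hGL2
    exact (memLp_map_measure_iff hGsm.aestronglyMeasurable measurable_fst.aemeasurable).1 hGL2
  have hF2 : MemLp (fun q : (ℝ × β) × β => G (q.1.1, q.2)) 2 ((ν.prod κ).prod κ) := by
    have h6 := hGL2
    rw [← hmap2] at h6
    exact (memLp_map_measure_iff hGsm.aestronglyMeasurable hmr.aemeasurable).1 h6
  have hFint : Integrable (fun q : (ℝ × β) × β => G q.1 * G (q.1.1, q.2))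
      ((ν.prod κ).prod κ) := by
    have h7 := hF2.smul (φ := fun q : (ℝ × β) × β => G q.1) hF1
      (r := 1) (hpqr := ⟨by simp [ENNReal.inv_two_add_inv_two]⟩)
    rw [memLp_one_iff_integrable] at h7
    simpa [Pi.smul_apply, smul_eq_mul, Pi.mul_def] using h7
  have hFm : AEStronglyMeasurable (fun q : (ℝ × β) × β => G q.1 * G (q.1.1, q.2))
      ((ν.prod κ).prod κ) :=
    ((hGm.comp measurable_fst).mul (hGm.comp hmr)).aestronglyMeasurable
  have h1 : ∫ q, G q.1 * G (q.1.1, q.2) ∂((ν.prod κ).prod κ)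
      = ∫ ω, G (A ω, B ω) * G (A ω, B' ω) ∂P := by
    rw [← hmapAll]
    exact integral_map (hABm.prodMk hB'm).aemeasurable (by rw [hmapAll]; exact hFm)
  have hHL2 : MemLp (fun p : ℝ × β => g p.1) 2 (ν.prod κ) := by
    have hmapfst2 : Measure.map (Prod.fst : ℝ × β → ℝ) (ν.prod κ) = ν := by simp
    have h8 := hgL2
    rw [← hmapfst2] at h8
    exact (memLp_map_measure_iff hgsm.aestronglyMeasurable measurable_fst.aemeasurable).1 h8
  have hHint : Integrable (fun p : ℝ × β => G p * g p.1) (ν.prod κ) := by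
    have h9 := hHL2.smul (φ := fun p : ℝ × β => G p) hGL2 (r := 1)
      (hpqr := ⟨by simp [ENNReal.inv_two_add_inv_two]⟩)
    rw [memLp_one_iff_integrable] at h9
    simpa [Pi.smul_apply, smul_eq_mul, Pi.mul_def] using h9
  have h2 : ∫ q, G q.1 * G (q.1.1, q.2) ∂((ν.prod κ).prod κ)
      = ∫ p, G p * g p.1 ∂(ν.prod κ) := by
    rw [integral_prod _ hFint]
    refine integral_congr_ae (Filter.Eventually.of_forall fun p => ?_)
    show ∫ b, G p * G (p.1, b) ∂κ = G p * g p.1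
    rw [integral_const_mul]
  have h3 : ∫ p, G p * g p.1 ∂(ν.prod κ) = ∫ a, g a ^ 2 ∂ν := by
    rw [integral_prod _ hHint]
    refine integral_congr_ae (Filter.Eventually.of_forall fun a => ?_)
    show ∫ b, G (a, b) * g a ∂κ = g a ^ 2
    rw [integral_mul_const, pow_two]
  have hYZ : ∫ ω, G (A ω, B ω) * G (A ω, B' ω) ∂P = ∫ a, g a ^ 2 ∂ν := by
    rw [← h1, h2, h3]
  -- final assembly
  have hvar : variance (P[(fun ω => G (A ω, B ω)) | MeasurableSpace.comap A inferInstance]) P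
      = variance (fun ω => g (A ω)) P := my_variance_congr hcond.symm
  have hvd := variance_eq_sub hhL2
  simp only [Pi.pow_apply] at hvd
  rw [hvar, hvd, hmean, hsq, ← hYZ]
/-- The Pick-Freeze identity: with independent inputs,
`Var[E(φ(X)|X_i)] = E[φ(X)φ(X^i)] − (E[φ(X)])²`, where `X^i` agrees with `X` in
coordinate `i` and with the independent copy `X'` elsewhere; consequently the first-order
Sobol' index satisfies `S_i = (E[φ(X)φ(X^i)] − E[φ(X)]²)/(E[φ(X)²] − E[φ(X)]²)`. -/
theorem pick_freeze_identity
    {Ω : Type*} [MeasurableSpace Ω] (P : Measure Ω) [IsProbabilityMeasure P]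
    (d : ℕ) (X X' : Ω → (Fin d → ℝ)) (φ : (Fin d → ℝ) → ℝ)
    (hφm : Measurable φ)
    (hXm : Measurable X) (hX'm : Measurable X')
    (hlaw : Measure.map X' P = Measure.map X P)
    (hindep : IndepFun X X' P)
    (hcomp : iIndepFun (fun i ω => X ω i) P)
    (hL2 : MemLp (fun ω => φ (X ω)) 2 P)
    (hVar : 0 < variance (fun ω => φ (X ω)) P)
    (i : Fin d) :
    variance (P[(fun ω => φ (X ω)) |
        MeasurableSpace.comap (fun ω => X ω i) inferInstance]) P
      = (∫ ω, φ (X ω) * φ (fun j => if j = i then X ω i else X' ω j) ∂P)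
        - (∫ ω, φ (X ω) ∂P) ^ 2 ∧
    variance (P[(fun ω => φ (X ω)) |
        MeasurableSpace.comap (fun ω => X ω i) inferInstance]) P
      / variance (fun ω => φ (X ω)) P
      = ((∫ ω, φ (X ω) * φ (fun j => if j = i then X ω i else X' ω j) ∂P)
          - (∫ ω, φ (X ω) ∂P) ^ 2)
        / ((∫ ω, φ (X ω) ^ 2 ∂P) - (∫ ω, φ (X ω) ∂P) ^ 2) := by
  classical
  set T : Finset (Fin d) := {i}ᶜ with hT
  set B : Ω → (T → ℝ) := fun ω j => X ω j with hB
  set B' : Ω → (T → ℝ) := fun ω j => X' ω j with hB'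
  set G : ℝ × (T → ℝ) → ℝ := fun p =>
    φ (fun j => if h : j = i then p.1 else p.2 ⟨j, by simp [hT, h]⟩) with hG
  have hrm : Measurable (fun x : Fin d → ℝ => (fun j : T => x j)) :=
    measurable_pi_lambda _ fun j => measurable_pi_apply _
  have hAm : Measurable (fun ω => X ω i) := (measurable_pi_apply i).comp hXm
  have hBm : Measurable B := hrm.comp hXm
  have hB'm : Measurable B' := hrm.comp hX'm
  have hGm : Measurable G := by
    apply hφm.comp
    apply measurable_pi_lambda
    intro j
    by_cases hj : (j : Fin d) = i
    · simp only [hG, dif_pos hj]; exact measurable_fst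
    · simp only [hG, dif_neg hj]; exact (measurable_pi_apply _).comp measurable_snd
  have hindepAB : IndepFun (fun ω => X ω i) B P := by
    have hid := hcomp.indepFun_finset {i} {i}ᶜ disjoint_compl_right
      (fun j => (measurable_pi_apply j).comp hXm)
    exact hid.comp (φ := fun v : ({i} : Finset (Fin d)) → ℝ => v ⟨i, Finset.mem_singleton_self i⟩)
      (ψ := id) (measurable_pi_apply _) measurable_id
  have hindepABB' : IndepFun (fun ω => (X ω i, B ω)) B' P := by
    have h0 : IndepFun ((fun x : Fin d → ℝ => (x i, fun j : T => x j)) ∘ X)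
        ((fun x : Fin d → ℝ => fun j : T => x j) ∘ X') P :=
      hindep.comp ((measurable_pi_apply i).prodMk hrm) hrm
    exact h0
  have hκ : Measure.map B' P = Measure.map B P := by
    have e1 : B' = (fun x : Fin d → ℝ => (fun j : T => x j)) ∘ X' := rfl
    have e2 : B = (fun x : Fin d → ℝ => (fun j : T => x j)) ∘ X := rfl
    rw [e1, e2, ← Measure.map_map hrm hX'm, ← Measure.map_map hrm hXm, hlaw]
  have hcondeq : (fun ω => φ (X ω)) = (fun ω => G (X ω i, B ω)) := by
    funext ω
    apply congrArg φ
    funext j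
    by_cases hj : j = i
    · subst hj; simp [hG]
    · simp [hG, hj, hB]
  have hmul : (fun ω => φ (X ω) * φ (fun j => if j = i then X ω i else X' ω j))
      = (fun ω => G (X ω i, B ω) * G (X ω i, B' ω)) := by
    funext ω
    have h2 : φ (fun j => if j = i then X ω i else X' ω j) = G (X ω i, B' ω) := by
      apply congrArg φ
      funext j
      by_cases hj : j = i
      · subst hj; simp [hG]
      · simp [hG, hj, hB']
    rw [h2, congrFun hcondeq ω]
  have hL2' : MemLp (fun ω => G (X ω i, B ω)) 2 P := hcondeq ▸ hL2
  have hkey := pick_freeze_aux P (fun ω => X ω i) B B' G hAm hBm hB'm hGm hindepAB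
    hindepABB' hκ hL2'
  have hvarY : variance (fun ω => φ (X ω)) P
      = (∫ ω, φ (X ω) ^ 2 ∂P) - (∫ ω, φ (X ω) ∂P) ^ 2 := by
    have h := variance_eq_sub hL2
    simpa [Pi.pow_apply] using h
  have hfirst : variance (P[(fun ω => φ (X ω)) |
      MeasurableSpace.comap (fun ω => X ω i) inferInstance]) P
      = (∫ ω, φ (X ω) * φ (fun j => if j = i then X ω i else X' ω j) ∂P)
        - (∫ ω, φ (X ω) ∂P) ^ 2 := by
    rw [hcondeq, hmul]; exact hkey
  refine ⟨hfirst, ?_⟩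
  rw [hfirst, hvarY]
end
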